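/- For a node ω in a tree G_n on n nodes and a neighbor u of ω, R(u, G_n) = R(ω, G_n) if and only if |T_u^ω| = n/2. Consequently, if ω satisfies |T_v^ω| ≤ n/2 for all neighbors v in a set N_l(ω), there is at most one u ∈ N_l(ω) with R(u, G_n) = R(ω, G_n). -/
import Mathlib


/-- `subtreeSet G u v` is the subtree `T_u^v` rooted at `u` when the tree is rooted at `v`. -/
def subtreeSet {V : Type*} (G : SimpleGraph V) (u v : V) : Set V :=
  {w | ∀ p : G.Walk v w, u ∈ p.support}

/-- Rumor centrality `R(s, G_n) = n! · ∏_{u} 1 / |T_u^s|`. -/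
noncomputable def rumorCentrality {V : Type*} [Fintype V] (G : SimpleGraph V) (s : V) : ℚ :=
  (Nat.factorial (Fintype.card V) : ℚ) * ∏ u : V, 1 / ((subtreeSet G u s).ncard : ℚ)

namespace TieAux
open SimpleGraph Walk
set_option linter.unusedSectionVars false

variable {V : Type*} [DecidableEq V] {G : SimpleGraph V}

/-- The unique path in a tree. -/
noncomputable def P (hG : G.IsTree) (s w : V) : G.Walk s w :=
  (hG.existsUnique_path s w).exists.choose

lemma P_isPath (hG : G.IsTree) (s w : V) : (P hG s w).IsPath :=
  (hG.existsUnique_path s w).exists.choose_spec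

lemma eq_P (hG : G.IsTree) {s w : V} (p : G.Walk s w) (hp : p.IsPath) : p = P hG s w :=
  (hG.existsUnique_path s w).unique hp (P_isPath hG s w)

lemma mem_subtree_iff (hG : G.IsTree) {v s w : V} :
    w ∈ subtreeSet G v s ↔ v ∈ (P hG s w).support := by
  constructor
  · exact fun h => h _
  · intro hv q
    have h1 : (q.toPath : G.Walk s w) = P hG s w := eq_P hG _ q.toPath.2
    exact q.support_toPath_subset (h1 ▸ hv)

lemma support_P_eq (hG : G.IsTree) {ω u : V} (h : G.Adj ω u) {w : V}
    (hu : u ∈ (P hG ω w).support) :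
    (P hG ω w).support = ω :: (P hG u w).support ∧
      (P hG ω w).dropUntil u hu = P hG u w := by
  have hdrop : (P hG ω w).dropUntil u hu = P hG u w :=
    eq_P hG _ ((P_isPath hG ω w).dropUntil hu)
  have hcons : (Walk.cons h Walk.nil : G.Walk ω u).IsPath := by
    simp [Walk.isPath_def, h.ne]
  have htake : (P hG ω w).takeUntil u hu = Walk.cons h Walk.nil :=
    (eq_P hG _ ((P_isPath hG ω w).takeUntil hu)).trans (eq_P hG _ hcons).symm
  have hspec := ((P hG ω w).take_spec hu).symm
  refine ⟨?_, hdrop⟩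
  rw [hspec, Walk.support_append, htake, hdrop]
  rw [(P hG u w).support_eq_cons]
  simp

lemma compl_iff (hG : G.IsTree) {ω u : V} (h : G.Adj ω u) {w : V} :
    w ∈ subtreeSet G ω u ↔ w ∉ subtreeSet G u ω := by
  rw [mem_subtree_iff hG, mem_subtree_iff hG]
  by_cases hu : u ∈ (P hG ω w).support
  · have hnodup := (P_isPath hG ω w).support_nodup
    rw [(support_P_eq hG h hu).1] at hnodup
    have hω : ω ∉ (P hG u w).support := (List.nodup_cons.1 hnodup).1
    simp [hu, hω]
  · have hp : (Walk.cons h.symm (P hG ω w)).IsPath := (P_isPath hG ω w).cons hu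
    have hω : ω ∈ (P hG u w).support := by rw [← eq_P hG _ hp]; simp
    simp [hu, hω]

lemma same_side (hG : G.IsTree) {ω u v : V} (h : G.Adj ω u) (hvω : v ≠ ω) (hvu : v ≠ u) :
    subtreeSet G v u = subtreeSet G v ω := by
  ext w
  rw [mem_subtree_iff hG, mem_subtree_iff hG]
  by_cases hu : u ∈ (P hG ω w).support
  · rw [(support_P_eq hG h hu).1]
    simp [hvω]
  · have hp : (Walk.cons h.symm (P hG ω w)).IsPath := (P_isPath hG ω w).cons hu
    rw [← eq_P hG _ hp]
    simp [hvu]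

lemma subtree_self (s : V) : subtreeSet G s s = Set.univ :=
  Set.eq_univ_of_forall fun _ p => p.start_mem_support

lemma self_mem (v s : V) : v ∈ subtreeSet G v s := fun p => p.end_mem_support

lemma root_not_mem {u ω : V} (hne : u ≠ ω) : ω ∉ subtreeSet G u ω :=
  fun hmem => hne (by simpa using hmem Walk.nil)

lemma compl_eq (hG : G.IsTree) {ω u : V} (h : G.Adj ω u) :
    subtreeSet G ω u = (subtreeSet G u ω)ᶜ := by
  ext w
  rw [Set.mem_compl_iff]
  exact compl_iff hG h

variable [Fintype V]

lemma ncard_pos' (v s : V) : 1 ≤ (subtreeSet G v s).ncard :=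
  (Set.ncard_pos (Set.toFinite _)).2 ⟨v, self_mem v s⟩

lemma card_sum (hG : G.IsTree) {ω u : V} (h : G.Adj ω u) :
    (subtreeSet G u ω).ncard + (subtreeSet G ω u).ncard = Fintype.card V := by
  rw [compl_eq hG h, Set.ncard_add_ncard_compl, Nat.card_eq_fintype_card]

lemma tie_iff (hG : G.IsTree) {ω u : V} (h : G.Adj ω u) :
    rumorCentrality G u = rumorCentrality G ω ↔
      2 * (subtreeSet G u ω).ncard = Fintype.card V := by
  set n := Fintype.card V with hn
  set t := (subtreeSet G u ω).ncard with ht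
  set m := (subtreeSet G ω u).ncard with hm
  have htm : t + m = n := card_sum hG h
  have ht1 : 1 ≤ t := ncard_pos' u ω
  have hm1 : 1 ≤ m := ncard_pos' ω u
  have hune : u ≠ ω := h.ne'
  set C : ℚ := ∏ v ∈ (Finset.univ.erase u).erase ω, 1 / ((subtreeSet G v ω).ncard : ℚ)
    with hC
  have hωmem : ω ∈ Finset.univ.erase u := Finset.mem_erase.2 ⟨Ne.symm hune, Finset.mem_univ ω⟩
  have hRω : rumorCentrality G ω =
      (Nat.factorial n : ℚ) * ((1 / (t : ℚ)) * ((1 / (n : ℚ)) * C)) := by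
    rw [rumorCentrality, ← Finset.mul_prod_erase _ _ (Finset.mem_univ u),
      ← Finset.mul_prod_erase _ _ hωmem, ← ht, subtree_self, Set.ncard_univ,
      Nat.card_eq_fintype_card, ← hn, ← hC]
  have hRu : rumorCentrality G u =
      (Nat.factorial n : ℚ) * ((1 / (n : ℚ)) * ((1 / (m : ℚ)) * C)) := by
    rw [rumorCentrality, ← Finset.mul_prod_erase _ _ (Finset.mem_univ u),
      ← Finset.mul_prod_erase _ _ hωmem, subtree_self, Set.ncard_univ,
      Nat.card_eq_fintype_card, ← hn, ← hm]
    congr 2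
    congr 1
    refine Finset.prod_congr rfl fun v hv => ?_
    rw [Finset.mem_erase, Finset.mem_erase] at hv
    rw [same_side hG h hv.1 hv.2.1]
  have hCpos : 0 < C := by
    refine Finset.prod_pos fun v _ => ?_
    have := ncard_pos' (G := G) v ω
    positivity
  have hn1 : 1 ≤ n := by omega
  rw [hRu, hRω]
  constructor
  · intro heq
    have hx : (Nat.factorial n : ℚ) * ((1 / (n : ℚ)) * C) ≠ 0 := by
      have h1 : (0:ℚ) < Nat.factorial n := by positivity
      have h2 : (0:ℚ) < n := by exact_mod_cast hn1
      positivity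
    have h2 : (1 : ℚ) / m = 1 / t := by
      apply mul_left_cancel₀ hx
      linear_combination heq
    have ht0 : (t : ℚ) ≠ 0 := by positivity
    have hm0 : (m : ℚ) ≠ 0 := by positivity
    rw [div_eq_div_iff hm0 ht0, one_mul, one_mul] at h2
    have : t = m := by exact_mod_cast h2
    omega
  · intro h2t
    have : m = t := by omega
    rw [this]
    ring

lemma disj (hG : G.IsTree) {ω u₁ u₂ : V} (h1 : G.Adj ω u₁) (h2 : G.Adj ω u₂)
    (hne : u₁ ≠ u₂) : Disjoint (subtreeSet G u₁ ω) (subtreeSet G u₂ ω) := by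
  rw [Set.disjoint_left]
  intro w hw1 hw2
  have m1 : u₁ ∈ (P hG ω w).support := (mem_subtree_iff hG).1 hw1
  have m2 : u₂ ∈ (P hG ω w).support := (mem_subtree_iff hG).1 hw2
  have e1 := (support_P_eq hG h1 m1).1
  have e2 := (support_P_eq hG h2 m2).1
  rw [(P hG u₁ w).support_eq_cons] at e1
  rw [(P hG u₂ w).support_eq_cons] at e2
  rw [e1] at e2
  injection e2 with _ e3
  injection e3 with e4 _
  exact hne e4

end TieAux

/-- For a neighbor `u` of `ω`, `R(u, G_n) = R(ω, G_n)` iff `|T_u^ω| = n/2`; consequently,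
if all subtrees towards a set `N_l(ω)` of neighbors have size at most `n/2`, there is at
most one `u ∈ N_l(ω)` with `R(u, G_n) = R(ω, G_n)`. -/
theorem tie_iff_half_and_unique {V : Type*} [Fintype V]
    (G : SimpleGraph V) (hG : G.IsTree) (ω : V) (Nl : Finset V)
    (hNl : ∀ v ∈ Nl, G.Adj ω v) :
    (∀ u ∈ Nl, (rumorCentrality G u = rumorCentrality G ω ↔
        2 * (subtreeSet G u ω).ncard = Fintype.card V)) ∧
    ((∀ v ∈ Nl, 2 * (subtreeSet G v ω).ncard ≤ Fintype.card V) →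
      ∀ u₁ ∈ Nl, ∀ u₂ ∈ Nl,
        rumorCentrality G u₁ = rumorCentrality G ω →
        rumorCentrality G u₂ = rumorCentrality G ω → u₁ = u₂) := by
  classical
  refine ⟨fun u hu => TieAux.tie_iff hG (hNl u hu), fun _ u₁ h1 u₂ h2 hr1 hr2 => ?_⟩
  by_contra hne
  have t1 := (TieAux.tie_iff hG (hNl u₁ h1)).1 hr1
  have t2 := (TieAux.tie_iff hG (hNl u₂ h2)).1 hr2
  have hd := TieAux.disj hG (hNl u₁ h1) (hNl u₂ h2) hne
  have hsub : subtreeSet G u₁ ω ∪ subtreeSet G u₂ ω ⊆ ({ω} : Set V)ᶜ := by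
    rintro x (hx | hx) hx' <;> rw [Set.mem_singleton_iff] at hx' <;> subst hx'
    · exact TieAux.root_not_mem (hNl u₁ h1).ne' hx
    · exact TieAux.root_not_mem (hNl u₂ h2).ne' hx
  have hc : ({ω} : Set V).ncard + (({ω} : Set V)ᶜ).ncard = Fintype.card V := by
    rw [Set.ncard_add_ncard_compl, Nat.card_eq_fintype_card]
  have hs1 : ({ω} : Set V).ncard = 1 := Set.ncard_singleton ω
  have hle : (subtreeSet G u₁ ω).ncard + (subtreeSet G u₂ ω).ncard ≤
      (({ω} : Set V)ᶜ).ncard := by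
    rw [← Set.ncard_union_eq hd (Set.toFinite _) (Set.toFinite _)]
    exact Set.ncard_le_ncard hsub (Set.toFinite _)
  have p1 := TieAux.ncard_pos' (G := G) u₁ ω
  omega
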